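/- Let G = V ⋊ K be in the minimal solvable setting with |V| = p^n. Then G is a setwise product of at most 2n(⌈log₂ p⌉) conjugates of K; in particular γ_cp(G) ≤ 2n(log₂ p + 1). -/

import Mathlib

open Pointwise

/-- The conjugate subgroup `A ^ g = g⁻¹ A g`. -/
def conjugate {G : Type*} [Group G] (A : Subgroup G) (g : G) : Subgroup G :=
  Subgroup.map (MulAut.conj g⁻¹).toMonoidHom A

lemma conjugate_one {G : Type*} [Group G] (K : Subgroup G) : conjugate K 1 = K := by
  ext x
  simp [conjugate, Subgroup.mem_map, MulAut.conj_apply]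

lemma map_selProd {M N : Type*} [Monoid M] [Monoid N] (f : M →* N) :
    ∀ (l : List M) (c : List Bool),
      f (List.zipWith (fun u b => if b then u else 1) l c).prod
        = (List.zipWith (fun u b => if b then u else 1) (l.map f) c).prod
  | [], c => by simp
  | u :: l, [] => by simp
  | u :: l, b :: c => by
    simp only [List.zipWith_cons_cons, List.prod_cons, map_mul, List.map_cons,
      map_selProd f l c]
    congr 1
    cases b <;> simp

lemma coe_selProd {G : Type*} [Group G] (V : Subgroup G) :
    ∀ (l : List V) (c : List Bool),
      (((List.zipWith (fun u b => if b then u else 1) l c).prod : V) : G)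
        = (List.zipWith (fun (u : V) (b : Bool) => if b then (u : G) else 1) l c).prod
  | [], c => by simp
  | u :: l, [] => by simp
  | u :: l, b :: c => by
    simp only [List.zipWith_cons_cons, List.prod_cons, Subgroup.coe_mul,
      coe_selProd V l c]
    congr 1
    cases b <;> simp

lemma bin_expand {M : Type*} [Monoid M] :
    ∀ (L : ℕ) (a : M) (m : ℕ), m < 2 ^ L →
      (List.zipWith (fun (u : M) (b : Bool) => if b then u else 1)
        ((List.range L).map fun j => a ^ 2 ^ j)
        ((List.range L).map m.testBit)).prod = a ^ m := by
  intro L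
  induction L with
  | zero =>
    intro a m hm
    interval_cases m
    simp
  | succ L ih =>
    intro a m hm
    rw [List.range_succ_eq_map]
    simp only [List.map_cons, List.map_map, List.zipWith_cons_cons, List.prod_cons]
    have h1 : (List.range L).map ((fun j => a ^ 2 ^ j) ∘ Nat.succ)
        = (List.range L).map (fun j => (a ^ 2) ^ 2 ^ j) := by
      apply List.map_congr_left
      intro j _
      simp only [Function.comp_apply]
      rw [← pow_mul, ← pow_succ']
    have h2 : (List.range L).map (m.testBit ∘ Nat.succ)
        = (List.range L).map ((m / 2).testBit) := by
      apply List.map_congr_left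
      intro j _
      simp only [Function.comp_apply, Nat.succ_eq_add_one, Nat.testBit_add_one]
    rw [h1, h2, ih (a ^ 2) (m / 2) (by omega)]
    rw [← pow_mul]
    have hmd := Nat.mod_add_div m 2
    rcases Nat.mod_two_eq_zero_or_one m with h0 | h0
    · have : m.testBit 0 = false := by simp [Nat.testBit_zero, h0]
      rw [this]
      simp only [Bool.false_eq_true, if_false, one_mul]
      congr 1
      omega
    · have : m.testBit 0 = true := by simp [Nat.testBit_zero, h0]
      rw [this]
      simp only [if_true, pow_zero, pow_one]
      rw [← pow_succ']
      congr 1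
      omega

universe u

lemma center_nontrivial_of_isNilpotent (H : Type*) [Group H] [hn : Group.IsNilpotent H]
    [Nontrivial H] : Nontrivial (Subgroup.center H) := by
  by_contra h
  have hbot : Subgroup.center H = ⊥ := by
    rwa [Subgroup.nontrivial_iff_ne_bot, not_ne_iff] at h
  have hucs : ∀ k, Subgroup.upperCentralSeries H k = ⊥ := by
    intro k
    induction k with
    | zero => rfl
    | succ k ihk =>
      rw [eq_bot_iff]
      intro x hx
      rw [mem_upperCentralSeries_succ_iff] at hx
      simp only [ihk, Subgroup.mem_bot] at hx
      have hxc : x ∈ Subgroup.center H := by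
        rw [Subgroup.mem_center_iff]
        intro y
        have hcomm : Commute x y := by
          have := hx y
          exact commutatorElement_eq_one_iff_commute.mp this
        exact hcomm.symm.eq
      rwa [hbot] at hxc
  obtain ⟨k, hk⟩ := hn.nilpotent
  have := hucs k
  rw [hk] at this
  obtain ⟨x, y, hxy⟩ := exists_pair_ne H
  apply hxy
  have hx : x ∈ (⊥ : Subgroup H) := this ▸ Subgroup.mem_top x
  have hy : y ∈ (⊥ : Subgroup H) := this ▸ Subgroup.mem_top y
  rw [Subgroup.mem_bot] at hx hy
  rw [hx, hy]

lemma cover {p : ℕ} (hp : p.Prime) :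
    ∀ (n : ℕ) (A : Type u) [CommGroup A] [Finite A], Nat.card A = p ^ n →
      (∀ a : A, a ^ p = 1) →
      ∃ l : List A, l.length = n * Nat.clog 2 p ∧
        ∀ g : A, ∃ c : List Bool, c.length = l.length ∧
          g = (List.zipWith (fun u b => if b then u else 1) l c).prod := by
  intro n
  induction n with
  | zero =>
    intro A _ _ hcard _
    have hsub : Subsingleton A := by
      rw [pow_zero] at hcard
      exact (Nat.card_eq_one_iff_unique.mp hcard).1
    exact ⟨[], by simp, fun g => ⟨[], by simp, (Subsingleton.elim g 1).trans (by simp)⟩⟩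
  | succ n ih =>
    intro A _ _ hcard hexp
    have hnt : Nontrivial A := by
      rw [← Finite.one_lt_card_iff_nontrivial, hcard]
      exact Nat.one_lt_pow (Nat.succ_ne_zero n) hp.one_lt
    obtain ⟨a, ha⟩ := exists_ne (1 : A)
    have horder : orderOf a = p := by
      have h1 : orderOf a ∣ p := orderOf_dvd_of_pow_eq_one (hexp a)
      rcases (Nat.dvd_prime hp).mp h1 with h | h
      · exact absurd (orderOf_eq_one_iff.mp h) ha
      · exact h
    have hcardH : Nat.card (Subgroup.zpowers a) = p := by
      rw [Nat.card_zpowers, horder]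
    have hcardQ : Nat.card (A ⧸ Subgroup.zpowers a) = p ^ n := by
      have hh := Subgroup.card_eq_card_quotient_mul_card_subgroup (Subgroup.zpowers a)
      rw [hcard, hcardH] at hh
      refine Nat.eq_of_mul_eq_mul_right hp.pos ?_
      rw [← hh, pow_succ]
    have hexpQ : ∀ q : A ⧸ Subgroup.zpowers a, q ^ p = 1 := by
      intro q
      obtain ⟨x, rfl⟩ := QuotientGroup.mk_surjective q
      rw [← QuotientGroup.mk_pow, hexp x, QuotientGroup.mk_one]
    obtain ⟨lQ, hlQlen, hlQcov⟩ := ih (A ⧸ Subgroup.zpowers a) hcardQ hexpQ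
    refine ⟨lQ.map Quotient.out ++ (List.range (Nat.clog 2 p)).map (fun j => a ^ 2 ^ j),
      ?_, ?_⟩
    · simp [hlQlen, Nat.succ_mul]
    intro g
    obtain ⟨cQ, hcQlen, hcQ⟩ := hlQcov (QuotientGroup.mk g)
    set x : A := (List.zipWith (fun u b => if b then u else 1) (lQ.map Quotient.out) cQ).prod
      with hx
    have hmkx : (QuotientGroup.mk x : A ⧸ Subgroup.zpowers a) = QuotientGroup.mk g := by
      rw [hcQ, hx]
      have hms := map_selProd (QuotientGroup.mk' (Subgroup.zpowers a)) (lQ.map Quotient.out) cQ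
      have hmaps : (lQ.map Quotient.out).map (QuotientGroup.mk' (Subgroup.zpowers a)) = lQ := by
        rw [List.map_map]
        have : (QuotientGroup.mk' (Subgroup.zpowers a)) ∘ Quotient.out = id := by
          funext q
          simp [QuotientGroup.mk'_apply, QuotientGroup.out_eq']
        rw [this, List.map_id]
      rw [hmaps] at hms
      exact hms
    have hxg : x⁻¹ * g ∈ Subgroup.zpowers a := QuotientGroup.eq.mp hmkx
    obtain ⟨k, hk⟩ := Subgroup.mem_zpowers_iff.mp hxg
    have hpz : (0 : ℤ) < (p : ℤ) := by exact_mod_cast hp.pos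
    have h0 : (0 : ℤ) ≤ k % (p : ℤ) := Int.emod_nonneg k (by positivity)
    set m : ℕ := (k % (p : ℤ)).toNat with hmdef
    have hkm : a ^ (k % (p : ℤ)) = a ^ k := by
      conv_rhs => rw [← Int.emod_add_mul_ediv k (p : ℤ)]
      rw [zpow_add, zpow_mul]
      have : a ^ ((p : ℤ)) = 1 := by
        rw [zpow_natCast, hexp a]
      rw [this, one_zpow, mul_one]
    have hm' : a ^ m = x⁻¹ * g := by
      have : a ^ ((m : ℤ)) = x⁻¹ * g := by
        rw [hmdef, Int.toNat_of_nonneg h0, hkm, hk]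
      rwa [zpow_natCast] at this
    have hmlt : m < p := by
      have := Int.emod_lt_of_pos k hpz
      omega
    have hmlt2 : m < 2 ^ Nat.clog 2 p := lt_of_lt_of_le hmlt (Nat.le_pow_clog one_lt_two p)
    refine ⟨cQ ++ (List.range (Nat.clog 2 p)).map m.testBit, ?_, ?_⟩
    · simp [hcQlen]
    · rw [List.zipWith_append (by simp [hcQlen]), List.prod_append,
        bin_expand (Nat.clog 2 p) a m hmlt2, ← hx, hm']
      group

theorem stmt_15 {G : Type*} [Group G] [Finite G] (p n : ℕ) (hp : p.Prime) (hn : 1 ≤ n)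
    (V K : Subgroup G)
    -- V is elementary abelian of order p^n
    (hVnorm : V.Normal) (hcardV : Nat.card V = p ^ n)
    (helem : ∀ v ∈ V, v ^ p = 1) (hVab : ∀ a ∈ V, ∀ b ∈ V, a * b = b * a)
    -- K is a nontrivial nilpotent complement to V with p ∤ |K|
    (hKne : K ≠ ⊥) (hKnil : Group.IsNilpotent K)
    (hcompl1 : V ⊓ K = ⊥) (hcompl2 : V ⊔ K = ⊤)
    (hcop : ¬ p ∣ Nat.card K)
    -- K acts faithfully and irreducibly on V
    (hfaith : ∀ x ∈ K, (∀ v ∈ V, x * v * x⁻¹ = v) → x = 1)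
    (hirr : ∀ W : Subgroup G, W ≤ V → (∀ x ∈ K, ∀ w ∈ W, x * w * x⁻¹ ∈ W) →
      W = ⊥ ∨ W = V)
    -- V is the unique minimal normal subgroup of G
    (hVne : V ≠ ⊥) (hmin : ∀ N : Subgroup G, N.Normal → N ≠ ⊥ → V ≤ N)
    -- all complements to V are conjugate to K
    (hconj : ∀ K' : Subgroup G, V ⊓ K' = ⊥ → V ⊔ K' = ⊤ → ∃ g : G, K' = conjugate K g) :
    ∃ l : List (Subgroup G), l.length ≤ 2 * n * Nat.clog 2 p ∧
      (∀ A ∈ l, ∃ g : G, A = conjugate K g) ∧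
      (l.map (fun A => (A : Set G))).prod = Set.univ := by
  classical
  -- a nontrivial central element z of K
  have hKnt : Nontrivial K := (Subgroup.nontrivial_iff_ne_bot K).mpr hKne
  have hcent : Nontrivial (Subgroup.center K) := center_nontrivial_of_isNilpotent K
  obtain ⟨c0, hc0⟩ := exists_ne (1 : Subgroup.center K)
  set z' : K := (c0 : K) with hz'
  have hz'mem : z' ∈ Subgroup.center K := c0.2
  have hz'ne : z' ≠ 1 := fun h => hc0 (Subtype.ext h)
  set z : G := (z' : G) with hzdef
  have hzK : z ∈ K := z'.2
  have hz1 : z ≠ 1 := fun h => hz'ne (Subtype.ext h)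
  have hzc : ∀ k ∈ K, z * k = k * z := by
    intro k hk
    have := (Subgroup.mem_center_iff.mp hz'mem) ⟨k, hk⟩
    exact (congrArg Subtype.val this).symm
  -- the fixed points of z in V are trivial
  have hWbot : V ⊓ Subgroup.centralizer {z} = ⊥ := by
    have hinv : ∀ x ∈ K, ∀ w ∈ V ⊓ Subgroup.centralizer {z},
        x * w * x⁻¹ ∈ V ⊓ Subgroup.centralizer {z} := by
      intro x hx w hw
      obtain ⟨hwV, hwc⟩ := Subgroup.mem_inf.mp hw
      refine Subgroup.mem_inf.mpr ⟨hVnorm.conj_mem w hwV x, ?_⟩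
      rw [Subgroup.mem_centralizer_iff]
      intro g hg
      rw [Set.mem_singleton_iff] at hg
      subst hg
      have hzx : z * x = x * z := hzc x hx
      have hzw : z * w = w * z := (Subgroup.mem_centralizer_iff.mp hwc) z rfl
      have hzxi : z * x⁻¹ = x⁻¹ * z := (Commute.inv_right (hzx : Commute z x)).eq
      calc z * (x * w * x⁻¹) = (z * x) * w * x⁻¹ := by group
        _ = (x * z) * w * x⁻¹ := by rw [hzx]
        _ = x * (z * w) * x⁻¹ := by group
        _ = x * (w * z) * x⁻¹ := by rw [hzw]
        _ = (x * w) * (z * x⁻¹) := by group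
        _ = (x * w) * (x⁻¹ * z) := by rw [hzxi]
        _ = (x * w * x⁻¹) * z := by group
    rcases hirr (V ⊓ Subgroup.centralizer {z}) inf_le_left hinv with h | h
    · exact h
    · exfalso
      apply hz1
      apply hfaith z hzK
      intro v hv
      have hvW : v ∈ V ⊓ Subgroup.centralizer {z} := by rw [h]; exact hv
      have hc := (Subgroup.mem_centralizer_iff.mp (Subgroup.mem_inf.mp hvW).2) z rfl
      rw [hc, mul_inv_cancel_right]
  -- the map t ↦ z t⁻¹ z⁻¹ t is a bijection of V
  have hmapsto : ∀ t ∈ V, z * t⁻¹ * z⁻¹ * t ∈ V := by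
    intro t ht
    exact mul_mem (hVnorm.conj_mem t⁻¹ (inv_mem ht) z) ht
  set F : V → V := fun t => ⟨z * (t : G)⁻¹ * z⁻¹ * t, hmapsto t t.2⟩ with hF
  have hFinj : Function.Injective F := by
    intro a b hab
    have h : z * (a : G)⁻¹ * z⁻¹ * a = z * (b : G)⁻¹ * z⁻¹ * b := congrArg Subtype.val hab
    have h1 : z * (a : G)⁻¹ * z⁻¹ = z * (b : G)⁻¹ * z⁻¹ * b * (a : G)⁻¹ := by
      rw [← h]
      group
    have h2 : z * ((b : G) * (a : G)⁻¹) * z⁻¹ = (b : G) * (a : G)⁻¹ := by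
      calc z * ((b : G) * (a : G)⁻¹) * z⁻¹
          = (z * b * z⁻¹) * (z * (a : G)⁻¹ * z⁻¹) := by group
        _ = (z * b * z⁻¹) * (z * (b : G)⁻¹ * z⁻¹ * b * (a : G)⁻¹) := by rw [h1]
        _ = (b : G) * (a : G)⁻¹ := by group
    have hmem : (b : G) * (a : G)⁻¹ ∈ V ⊓ Subgroup.centralizer {z} := by
      refine Subgroup.mem_inf.mpr ⟨mul_mem b.2 (inv_mem a.2), ?_⟩
      rw [Subgroup.mem_centralizer_iff]
      intro g hg
      rw [Set.mem_singleton_iff] at hg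
      subst hg
      calc z * ((b : G) * (a : G)⁻¹) = (z * ((b : G) * (a : G)⁻¹) * z⁻¹) * z := by group
        _ = ((b : G) * (a : G)⁻¹) * z := by rw [h2]
    rw [hWbot, Subgroup.mem_bot] at hmem
    have : (a : G) = (b : G) := by
      have := mul_inv_eq_one.mp hmem
      rw [this]
    exact Subtype.ext this
  have hFsurj : Function.Surjective F := Finite.surjective_of_injective hFinj
  choose tf htf using hFsurj
  have htf' : ∀ u : V, z * ((tf u : G))⁻¹ * z⁻¹ * (tf u : G) = (u : G) :=
    fun u => congrArg Subtype.val (htf u)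
  -- covering list for V
  letI : CommGroup V :=
    { (inferInstance : Group V) with
      mul_comm := fun a b => Subtype.ext (hVab a a.2 b b.2) }
  have hVexp : ∀ aa : V, aa ^ p = 1 := by
    intro aa
    have h1 : ((aa ^ p : V) : G) = 1 := by
      push_cast
      exact helem _ aa.2
    exact_mod_cast h1
  obtain ⟨l, hlen, hcov⟩ := cover hp n V hcardV hVexp
  set pair : V → List (Subgroup G) := fun u => [K, conjugate K (tf u : G)] with hpair
  -- the main claim
  have claim : ∀ (l' : List V) (c : List Bool), c.length = l'.length →
      ((List.zipWith (fun (u : V) (b : Bool) => if b then (u : G) else 1) l' c).prod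
        ∈ ((l'.flatMap pair).map (fun A => (A : Set G))).prod) ∧
      (l' ≠ [] → ∀ k0 ∈ K,
        k0 * (List.zipWith (fun (u : V) (b : Bool) => if b then (u : G) else 1) l' c).prod
          ∈ ((l'.flatMap pair).map (fun A => (A : Set G))).prod) := by
    intro l'
    induction l' with
    | nil =>
      intro c hc
      constructor
      · simp
      · intro h
        exact absurd rfl h
    | cons u rest ihr =>
      intro c hc
      rcases c with _ | ⟨b, cb⟩
      · simp at hc
      · simp only [List.length_cons] at hc
        have hc' : cb.length = rest.length := by omega
        have key : ∀ k0 ∈ K,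
            k0 * ((List.zipWith (fun (u : V) (b : Bool) => if b then (u : G) else 1)
              (u :: rest) (b :: cb)).prod)
            ∈ (((u :: rest).flatMap pair).map (fun A => (A : Set G))).prod := by
          intro k0 hk0
          have hbind : ((u :: rest).flatMap pair).map (fun A => (A : Set G))
              = (K : Set G) :: ((conjugate K (tf u : G) : Set G)
                :: ((rest.flatMap pair).map (fun A => (A : Set G)))) := by
            simp [hpair]
          rw [hbind]
          simp only [List.prod_cons]
          have hrest := (ihr cb hc').1
          set w1 : G := if b then z else 1 with hw1
          set e2 : G := if b then (tf u : G)⁻¹ * z⁻¹ * (tf u : G) else 1 with he2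
          have helt : k0 * ((List.zipWith (fun (u : V) (b : Bool) => if b then (u : G) else 1)
              (u :: rest) (b :: cb)).prod)
              = (k0 * w1) * (e2 *
                (List.zipWith (fun (u : V) (b : Bool) => if b then (u : G) else 1)
                  rest cb).prod) := by
            simp only [List.zipWith_cons_cons, List.prod_cons]
            cases b
            · simp [hw1, he2]
            · simp only [if_true, hw1, he2]
              rw [← htf' u]
              group
          rw [helt]
          refine Set.mul_mem_mul ?_ (Set.mul_mem_mul ?_ hrest)
          · cases b
            · simpa [hw1] using hk0
            · simp only [hw1, if_true]
              exact mul_mem hk0 hzK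
          · cases b
            · simp only [he2, Bool.false_eq_true, if_false]
              exact one_mem _
            · simp only [he2, if_true]
              refine Subgroup.mem_map.mpr ⟨z⁻¹, inv_mem hzK, ?_⟩
              simp [MulAut.conj_apply]
        refine ⟨?_, fun _ => key⟩
        have := key 1 (one_mem K)
        simpa using this
  -- assemble
  refine ⟨l.flatMap pair, ?_, ?_, ?_⟩
  · have hlb : (l.flatMap pair).length = 2 * l.length := by
      induction l with
      | nil => simp
      | cons u rest ih =>
        simp only [List.flatMap_cons, List.length_append, List.length_cons, ih]
        simp [hpair]
        ring
    rw [hlb, hlen]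
    ring_nf
    omega
  · intro A hA
    rw [List.mem_flatMap] at hA
    obtain ⟨u, hu, hA⟩ := hA
    simp only [hpair, List.mem_cons, List.mem_singleton, List.not_mem_nil, or_false] at hA
    rcases hA with rfl | rfl
    · exact ⟨1, (conjugate_one _).symm⟩
    · exact ⟨(tf u : G), rfl⟩
  · rw [Set.eq_univ_iff_forall]
    intro g
    have hg : g ∈ (K : Set G) * (V : Set G) := by
      have : ((K ⊔ V : Subgroup G) : Set G) = (K : Set G) * V := Subgroup.mul_normal K V
      rw [← this, sup_comm, hcompl2]
      trivial
    obtain ⟨k0, hk0, v, hv, rfl⟩ := Set.mem_mul.mp hg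
    obtain ⟨c, hclen, hcv⟩ := hcov ⟨v, hv⟩
    have hveq : v = (List.zipWith (fun (u : V) (b : Bool) => if b then (u : G) else 1)
        l c).prod := by
      have h1 := congrArg Subtype.val hcv
      rwa [coe_selProd] at h1
    have hlne : l ≠ [] := by
      intro h
      rw [h] at hlen
      simp at hlen
      have hcl : 0 < Nat.clog 2 p := Nat.clog_pos one_lt_two hp.two_le
      rcases hlen with h | h
      · omega
      · omega
    have hmem := (claim l c hclen).2 hlne k0 hk0
    rw [← hveq] at hmem
    exact hmem
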